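/- Fix an integer ℓ ≥ 0. Assume both the β-strong P-order and the γ-strong C-order assumptions hold for some β ≥ 0 and γ ≥ 0. Then every ℓ-Greedy-Local matching M' satisfies w(M) ≤ max{1, β+γ}·w(M') for every matching M of the instance. -/
import Mathlib


/-- A matching of a bipartite instance with edge set `E ⊆ P × C`. -/
def IsBipMatching {s q : ℕ} (E M : Finset (Fin s × Fin q)) : Prop :=
  M ⊆ E ∧ ∀ e₁ ∈ M, ∀ e₂ ∈ M, e₁ ≠ e₂ → e₁.1 ≠ e₂.1 ∧ e₁.2 ≠ e₂.2

/-- The β-strong P-order assumption. -/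
def StrongPOrder {s q : ℕ} (E : Finset (Fin s × Fin q)) (w : Fin s × Fin q → ℝ)
    (β : ℝ) : Prop :=
  ∀ i j : Fin s, i < j → ∀ c : Fin q, (i, c) ∈ E → (j, c) ∈ E → w (j, c) ≤ β * w (i, c)

/-- The γ-strong C-order assumption. -/
def StrongCOrder {s q : ℕ} (E : Finset (Fin s × Fin q)) (w : Fin s × Fin q → ℝ)
    (γ : ℝ) : Prop :=
  ∀ i j : Fin q, i < j → ∀ p : Fin s, (p, i) ∈ E → (p, j) ∈ E → w (p, j) ≤ γ * w (p, i)

/-- `availSet E M' j` = the set `A_j` of C-vertices `c` with `(p_j, c) ∈ E` that are not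
blocked by an edge `(p_i, c) ∈ M'` with `i < j`. -/
def availSet {s q : ℕ} (E M' : Finset (Fin s × Fin q)) (j : Fin s) : Finset (Fin q) :=
  Finset.univ.filter (fun c : Fin q => (j, c) ∈ E ∧ ∀ i : Fin s, i < j → (i, c) ∉ M')

/-- `firstAvail E M' ℓ j` = the set `F_j` of the min(ℓ+1, |A_j|) first elements of `A_j`
in C-order (those with at most ℓ smaller elements of `A_j`). -/
def firstAvail {s q : ℕ} (E M' : Finset (Fin s × Fin q)) (ℓ : ℕ) (j : Fin s) :
    Finset (Fin q) :=
  (availSet E M' j).filter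
    (fun c : Fin q => ((availSet E M' j).filter (fun c' : Fin q => c' < c)).card ≤ ℓ)

/-- An ℓ-Greedy-Local matching: a matching `M'` such that whenever `A_j ≠ ∅`, `p_j` is matched
to a maximum-weight edge among `F_j` (the ℓ+1 first still-available C-neighbors), and whenever
`A_j = ∅`, `p_j` is unmatched. -/
def GreedyLocalL {s q : ℕ} (E : Finset (Fin s × Fin q)) (w : Fin s × Fin q → ℝ) (ℓ : ℕ)
    (M' : Finset (Fin s × Fin q)) : Prop :=
  IsBipMatching E M' ∧ ∀ j : Fin s,
    ((availSet E M' j).Nonempty →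
      ∃ c ∈ firstAvail E M' ℓ j, (j, c) ∈ M' ∧
        ∀ c' ∈ firstAvail E M' ℓ j, w (j, c') ≤ w (j, c)) ∧
    (availSet E M' j = ∅ → ∀ c : Fin q, (j, c) ∉ M')

lemma first_lt {s q : ℕ} (E M' : Finset (Fin s × Fin q)) (ℓ : ℕ) (j : Fin s)
    {c d : Fin q} (hc : c ∈ availSet E M' j) (hcn : c ∉ firstAvail E M' ℓ j)
    (hd : d ∈ firstAvail E M' ℓ j) : d < c := by
  by_contra h
  push_neg at h
  apply hcn
  simp only [firstAvail, Finset.mem_filter] at hd ⊢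
  refine ⟨hc, le_trans (Finset.card_le_card ?_) hd.2⟩
  intro x hx
  simp only [Finset.mem_filter] at hx ⊢
  exact ⟨hx.1, lt_of_lt_of_le hx.2 h⟩

/-- Under both the β-strong P-order and the γ-strong C-order assumptions,
the ℓ-Greedy-Local algorithm is max{1, β+γ}-approximate. -/
theorem stmt9 {s q : ℕ} (ℓ : ℕ) (E : Finset (Fin s × Fin q)) (w : Fin s × Fin q → ℝ)
    (hw : ∀ e ∈ E, 0 < w e) (β γ : ℝ) (hβ : 0 ≤ β) (hγ : 0 ≤ γ)
    (hordP : StrongPOrder E w β) (hordC : StrongCOrder E w γ)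
    (M' : Finset (Fin s × Fin q)) (hM' : GreedyLocalL E w ℓ M')
    (M : Finset (Fin s × Fin q)) (hM : IsBipMatching E M) :
    ∑ e ∈ M, w e ≤ max 1 (β + γ) * ∑ e ∈ M', w e := by
  classical
  obtain ⟨⟨hM'sub, hM'match⟩, hgl⟩ := hM'
  obtain ⟨hMsub, hMmatch⟩ := hM
  have hK1 : (1 : ℝ) ≤ max 1 (β + γ) := le_max_left _ _
  have hKbg : β + γ ≤ max 1 (β + γ) := le_max_right _ _
  choose cstar hcF hcM hcMax using fun j => (hgl j).1
  -- the charging map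
  set φ : Fin s × Fin q → Fin s × Fin q := fun e =>
    if h : e.2 ∈ availSet E M' e.1 then (e.1, cstar e.1 ⟨e.2, h⟩)
    else if h2 : ∃ i, i < e.1 ∧ (i, e.2) ∈ M' then (h2.choose, e.2) else e with hφdef
  -- φ maps M into M'
  have hblock : ∀ e ∈ M, e.2 ∉ availSet E M' e.1 → ∃ i, i < e.1 ∧ (i, e.2) ∈ M' := by
    intro e heM hna
    have heE : e ∈ E := hMsub heM
    by_contra hcon
    push_neg at hcon
    apply hna
    simp only [availSet, Finset.mem_filter, Finset.mem_univ, true_and]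
    exact ⟨heE, fun i hi => hcon i hi⟩
  have hmaps : ∀ e ∈ M, φ e ∈ M' := by
    intro e heM
    by_cases h : e.2 ∈ availSet E M' e.1
    · simp only [hφdef, dif_pos h]
      exact hcM e.1 ⟨e.2, h⟩
    · have h2 := hblock e heM h
      simp only [hφdef, dif_neg h, dif_pos h2]
      exact h2.choose_spec.2
  rw [← Finset.sum_fiberwise_of_maps_to hmaps (fun e => w e), Finset.mul_sum]
  apply Finset.sum_le_sum
  intro f hf
  have hwf : 0 < w f := hw f (hM'sub hf)
  set T := M.filter (fun e => φ e = f) with hT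
  set Tr := T.filter (fun e => e.2 ∈ availSet E M' e.1) with hTr
  set Tc := T.filter (fun e => ¬ e.2 ∈ availSet E M' e.1) with hTc
  have hsplit : ∑ e ∈ T, w e = ∑ e ∈ Tr, w e + ∑ e ∈ Tc, w e :=
    (Finset.sum_filter_add_sum_filter_not T _ _).symm
  -- facts about row elements
  have hTrmem : ∀ e ∈ Tr, e ∈ M ∧ ∃ h : e.2 ∈ availSet E M' e.1,
      f = (e.1, cstar e.1 ⟨e.2, h⟩) := by
    intro e he
    simp only [hTr, hT, Finset.mem_filter] at he
    refine ⟨he.1.1, he.2, ?_⟩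
    have := he.1.2
    simp only [hφdef, dif_pos he.2] at this
    exact this.symm
  have hTcmem : ∀ e ∈ Tc, e ∈ M ∧ e.2 = f.2 ∧ f.1 < e.1 := by
    intro e he
    simp only [hTc, hT, Finset.mem_filter] at he
    have h2 := hblock e he.1.1 he.2
    have hfe : φ e = f := he.1.2
    simp only [hφdef, dif_neg he.2, dif_pos h2] at hfe
    refine ⟨he.1.1, ?_, ?_⟩
    · rw [← hfe]
    · rw [← hfe]; exact h2.choose_spec.1
  -- column bound
  have hcolbound : ∀ e ∈ Tc, w e ≤ β * w f := by
    intro e he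
    obtain ⟨heM, he2, hlt⟩ := hTcmem e he
    have heE : e ∈ E := hMsub heM
    have hfE : f ∈ E := hM'sub hf
    have h3 := hordP f.1 e.1 hlt e.2 (by rw [he2]; exact hfE) heE
    calc w e = w (e.1, e.2) := by rw [Prod.mk.eta]
      _ ≤ β * w (f.1, e.2) := h3
      _ = β * w f := by rw [he2, Prod.mk.eta]
  -- row bound
  have hrowbound : ∀ e ∈ Tr, (w e ≤ γ * w f) ∨ (w e ≤ w f ∧ e.2 ≤ f.2) := by
    intro e he
    obtain ⟨heM, h, hfeq⟩ := hTrmem e he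
    have heE : e ∈ E := hMsub heM
    have hfM' : f ∈ M' := hf
    have hfE : f ∈ E := hM'sub hfM'
    have hne : (availSet E M' e.1).Nonempty := ⟨e.2, h⟩
    have hcF' : cstar e.1 hne ∈ firstAvail E M' ℓ e.1 := hcF e.1 hne
    have hf1 : f.1 = e.1 := by rw [hfeq]
    have hf2 : f.2 = cstar e.1 hne := by rw [hfeq]
    by_cases hin : e.2 ∈ firstAvail E M' ℓ e.1
    · -- e.2 ∈ F_j : w e ≤ w f
      have hle : w (e.1, e.2) ≤ w (e.1, cstar e.1 hne) := hcMax e.1 hne e.2 hin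
      rcases lt_trichotomy e.2 f.2 with hlt | heq | hgt
      · right
        constructor
        · calc w e = w (e.1, e.2) := by rw [← Prod.mk.eta (p := e)]
            _ ≤ w (e.1, cstar e.1 hne) := hle
            _ = w f := by rw [← hf2, ← hf1, Prod.mk.eta]
        · exact le_of_lt hlt
      · right
        refine ⟨le_of_eq ?_, le_of_eq heq⟩
        have : e = f := Prod.ext hf1.symm heq
        rw [this]
      · -- f.2 < e.2 : use C-order
        left
        have := hordC f.2 e.2 hgt e.1 (by rw [hf1.symm, Prod.mk.eta]; exact hfE)
          (by rw [Prod.mk.eta]; exact heE)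
        calc w e = w (e.1, e.2) := by rw [Prod.mk.eta]
          _ ≤ γ * w (e.1, f.2) := this
          _ = γ * w f := by rw [← hf1, Prod.mk.eta]
    · -- e.2 ∉ F_j : cstar < e.2, use C-order
      left
      have hlt : cstar e.1 hne < e.2 := first_lt E M' ℓ e.1 h hin hcF'
      have hlt' : f.2 < e.2 := by rw [hf2]; exact hlt
      have := hordC f.2 e.2 hlt' e.1 (by rw [hf1.symm, Prod.mk.eta]; exact hfE)
        (by rw [Prod.mk.eta]; exact heE)
      calc w e = w (e.1, e.2) := by rw [Prod.mk.eta]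
        _ ≤ γ * w (e.1, f.2) := this
        _ = γ * w f := by rw [← hf1, Prod.mk.eta]
  -- subsingleton facts
  have hTrsub : ∀ e ∈ Tr, ∀ e' ∈ Tr, e = e' := by
    intro e he e' he'
    obtain ⟨heM, h, hfeq⟩ := hTrmem e he
    obtain ⟨heM', h', hfeq'⟩ := hTrmem e' he'
    by_contra hne
    have h1 : e.1 = e'.1 := by
      injection hfeq.symm.trans hfeq'
    exact (hMmatch e heM e' heM' hne).1 h1
  have hTcsub : ∀ e ∈ Tc, ∀ e' ∈ Tc, e = e' := by
    intro e he e' he'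
    obtain ⟨heM, h2, _⟩ := hTcmem e he
    obtain ⟨heM', h2', _⟩ := hTcmem e' he'
    by_contra hne
    exact (hMmatch e heM e' heM' hne).2 (h2.trans h2'.symm)
  rw [hsplit]
  -- final case analysis
  rcases Finset.eq_empty_or_nonempty Tr with hTre | ⟨er, her⟩
  · rcases Finset.eq_empty_or_nonempty Tc with hTce | ⟨ec, hec⟩
    · rw [hTre, hTce]
      simp only [Finset.sum_empty, add_zero]
      positivity
    · have hTceq : Tc = {ec} := by
        apply Finset.eq_singleton_iff_unique_mem.mpr
        exact ⟨hec, fun x hx => hTcsub x hx ec hec⟩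
      rw [hTre, hTceq]
      simp only [Finset.sum_empty, Finset.sum_singleton, zero_add]
      calc w ec ≤ β * w f := hcolbound ec hec
        _ ≤ max 1 (β + γ) * w f := by
            apply mul_le_mul_of_nonneg_right _ hwf.le
            linarith
  · have hTreq : Tr = {er} := by
      apply Finset.eq_singleton_iff_unique_mem.mpr
      exact ⟨her, fun x hx => hTrsub x hx er her⟩
    rcases Finset.eq_empty_or_nonempty Tc with hTce | ⟨ec, hec⟩
    · rw [hTreq, hTce]
      simp only [Finset.sum_empty, Finset.sum_singleton, add_zero]
      rcases hrowbound er her with hb | ⟨hb, _⟩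
      · calc w er ≤ γ * w f := hb
          _ ≤ max 1 (β + γ) * w f := by
              apply mul_le_mul_of_nonneg_right _ hwf.le
              linarith
      · calc w er ≤ w f := hb
          _ ≤ max 1 (β + γ) * w f := le_mul_of_one_le_left hwf.le hK1
    · have hTceq : Tc = {ec} := by
        apply Finset.eq_singleton_iff_unique_mem.mpr
        exact ⟨hec, fun x hx => hTcsub x hx ec hec⟩
      rw [hTreq, hTceq]
      simp only [Finset.sum_singleton]
      have hcb : w ec ≤ β * w f := hcolbound ec hec
      rcases hrowbound er her with hb | ⟨hb, hle⟩
      · calc w er + w ec ≤ γ * w f + β * w f := add_le_add hb hcb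
          _ = (β + γ) * w f := by ring
          _ ≤ max 1 (β + γ) * w f := mul_le_mul_of_nonneg_right hKbg hwf.le
      · -- er.2 ≤ f.2, and ec.2 = f.2 forces er.2 < f.2 (else er = ec contradiction)
        obtain ⟨herM, hav, hfeq⟩ := hTrmem er her
        obtain ⟨hecM, hec2, _⟩ := hTcmem ec hec
        have hnelt : er.2 < f.2 := by
          rcases lt_or_eq_of_le hle with h | h
          · exact h
          · exfalso
            have hne : er ≠ ec := by
              intro hcontra
              have h1 : er ∈ Tc := hcontra ▸ hec
              simp only [hTc, Finset.mem_filter] at h1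
              exact h1.2 hav
            exact (hMmatch er herM ec hecM hne).2 (h.trans hec2.symm)
        -- then γ ≥ 1
        have herE : er ∈ E := hMsub herM
        have hfE : f ∈ E := hM'sub hf
        have hf1 : f.1 = er.1 := by rw [hfeq]
        have hrev := hordC er.2 f.2 hnelt er.1 (by rw [Prod.mk.eta]; exact herE)
          (by rw [hf1.symm, Prod.mk.eta]; exact hfE)
        have hwer : 0 < w er := hw er herE
        have hfw : w f ≤ γ * w er := by
          calc w f = w (er.1, f.2) := by rw [← hf1, Prod.mk.eta]
            _ ≤ γ * w (er.1, er.2) := hrev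
            _ = γ * w er := by rw [Prod.mk.eta]
        have hγ1 : 1 ≤ γ := by
          by_contra hc
          push_neg at hc
          have : w f ≤ γ * w f := hfw.trans (by nlinarith)
          nlinarith
        calc w er + w ec ≤ w f + β * w f := add_le_add hb hcb
          _ = (1 + β) * w f := by ring
          _ ≤ (β + γ) * w f := by nlinarith
          _ ≤ max 1 (β + γ) * w f := mul_le_mul_of_nonneg_right hKbg hwf.le
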